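/- arXiv:2508.14384 — 2 statements merged into one kernel-verified Lean document; each statement's English description precedes it below -/
import Mathlib

section
/- Let w be a string and let 0 ≤ a ≤ c ≤ b ≤ d < |w|. If w[a..b] and w[c..d] are both palindromes and w[a..b] = w[c..d] as strings, then w[a..d] is a palindrome (possibly of odd length). -/
/-- The factor `w[i..j]` of `w`, from position `i` to position `j` inclusive
(the empty string when `i > j`). -/
def factor {α : Type*} (w : List α) (i j : ℕ) : List α :=
  (w.drop i).take (j + 1 - i)

/-- A string is a palindrome if it equals its reverse. -/
def IsPal {α : Type*} (l : List α) : Prop := l.reverse = l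

/-- `MEPal w c` is the length of the longest palindromic factor of `w` of the
form `w[c-r..c+r-1]` (with `r ≥ 0`, `c - r ≥ 0`, `c + r ≤ |w|`). -/
noncomputable def MEPal {α : Type*} (w : List α) (c : ℕ) : ℕ :=
  2 * sSup {r : ℕ | r ≤ c ∧ c + r ≤ w.length ∧ IsPal (factor w (c - r) (c + r - 1))}

/-- The maximal even-palindrome array of `w`. -/
noncomputable def MEPalArr {α : Type*} (w : List α) : List ℕ :=
  (List.range w.length).map (MEPal w)

/-- `LEPal w j` is the length of the longest even-length palindromic suffix of
the prefix `w[0..j]`. -/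
noncomputable def LEPal {α : Type*} (w : List α) (j : ℕ) : ℕ :=
  sSup {ℓ : ℕ | ℓ % 2 = 0 ∧ ℓ ≤ j + 1 ∧ IsPal (factor w (j + 1 - ℓ) j)}

/-- The longest even-palindrome array of `w`. -/
noncomputable def LEPalArr {α : Type*} (w : List α) : List ℕ :=
  (List.range w.length).map (LEPal w)

/-- A positive integer `p` is a period of `u` if `u[i] = u[i+p]` for all
`0 ≤ i ≤ |u| - p - 1`. -/
def HasPeriod {α : Type*} (u : List α) (p : ℕ) : Prop :=
  ∀ i, i + p < u.length → u[i]? = u[i + p]?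


lemma getElem?_factor {α : Type*} (w : List α) (i j k : ℕ) (hk : k < j + 1 - i) :
    (factor w i j)[k]? = w[i + k]? := by
  simp [factor, List.getElem?_take, hk, List.getElem?_drop]

lemma length_factor {α : Type*} (w : List α) (i j : ℕ) :
    (factor w i j).length = min (j + 1 - i) (w.length - i) := by
  simp [factor]

theorem stmt5 {α : Type*} (w : List α) (a b c d : ℕ)
    (hac : a ≤ c) (hcb : c ≤ b) (hbd : b ≤ d) (hd : d < w.length)
    (p1 : IsPal (factor w a b)) (p2 : IsPal (factor w c d))
    (heq : factor w a b = factor w c d) :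
    IsPal (factor w a d) := by
  have hb : b < w.length := lt_of_le_of_lt hbd hd
  have hlen1 : (factor w a b).length = b + 1 - a := by
    rw [length_factor]; omega
  have hlen2 : (factor w c d).length = d + 1 - c := by
    rw [length_factor]; omega
  have hlenad : (factor w a d).length = d + 1 - a := by
    rw [length_factor]; omega
  have hL : b + 1 - a = d + 1 - c := by
    have := congrArg List.length heq
    rwa [hlen1, hlen2] at this
  have key1 : ∀ k, k < b + 1 - a → w[a + k]? = w[c + k]? := by
    intro k hk
    have h := congrArg (fun l => l[k]?) heq
    rwa [getElem?_factor w a b k hk, getElem?_factor w c d k (by omega)] at h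
  have key2 : ∀ k, k < d + 1 - c → w[c + k]? = w[d - k]? := by
    intro k hk
    have h := congrArg (fun l => l[k]?) p2
    rw [List.getElem?_reverse (by omega), hlen2,
      getElem?_factor w c d k hk,
      getElem?_factor w c d (d + 1 - c - 1 - k) (by omega)] at h
    have e : c + (d + 1 - c - 1 - k) = d - k := by omega
    rw [e] at h
    exact h.symm
  have half : ∀ i, i < b + 1 - a → w[a + i]? = w[d - i]? := by
    intro i hi
    rw [key1 i hi]
    exact key2 i (by omega)
  have full : ∀ i, i < d + 1 - a → w[a + i]? = w[d - i]? := by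
    intro i hi
    by_cases hcase : i < b + 1 - a
    · exact half i hcase
    · have hj : d - a - i < b + 1 - a := by omega
      have h1 := half (d - a - i) hj
      have e1 : a + i = d - (d - a - i) := by omega
      have e2 : d - i = a + (d - a - i) := by omega
      rw [e1, e2]
      exact h1.symm
  unfold IsPal
  apply List.ext_getElem?
  intro n
  by_cases hn : n < d + 1 - a
  · rw [List.getElem?_reverse (by omega), hlenad,
      getElem?_factor w a d n hn,
      getElem?_factor w a d (d + 1 - a - 1 - n) (by omega)]
    have e : a + (d + 1 - a - 1 - n) = d - n := by omega
    rw [e]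
    exact (full n hn).symm
  · rw [List.getElem?_eq_none (by simp; omega), List.getElem?_eq_none (by omega)]
end

section
/- Let w be a string of length n and let 0 ≤ i ≤ j ≤ n−1. Define: ℓ_p as the length of the longest palindromic prefix of w[i..j]; ℓ_s as the length of the longest palindromic suffix of w[i..j]; and ℓ_m as the maximum length of a nonempty maximal palindrome w[a..b] of w satisfying i+1 ≤ a and b ≤ j−1 (with ℓ_m = 0 if no such factor exists). Then the length of the longest palindromic factor of w[i..j] equals max(ℓ_p, ℓ_s, ℓ_m). -/
section Aux
variable {α : Type*}

lemma factor_length (w : List α) (a b : ℕ) (hb : b < w.length) :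
    (factor w a b).length = b + 1 - a := by
  simp [factor]; omega

lemma drop_take_factor (w : List α) (i j a b : ℕ) (hia : i ≤ a) (hbj : b ≤ j) :
    ((factor w i j).drop (a - i)).take (b + 1 - a) = factor w a b := by
  unfold factor
  rw [List.drop_take, List.drop_drop, List.take_take]
  congr 1
  · show min (b + 1 - a) (j + 1 - i - (a - i)) = b + 1 - a
    omega
  · congr 1; omega

lemma factor_infix (w : List α) (i j a b : ℕ) (hia : i ≤ a) (hbj : b ≤ j) :
    factor w a b <:+: factor w i j := by
  rw [← drop_take_factor w i j a b hia hbj]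
  exact (List.take_prefix _ _).isInfix.trans (List.drop_suffix _ _).isInfix

lemma isPal_drop_take {l : List α} (h : IsPal l) (k : ℕ) :
    IsPal ((l.drop k).take (l.length - 2*k)) := by
  rcases le_or_gt l.length (2*k) with hk | hk
  · rw [Nat.sub_eq_zero_of_le hk]; simp [IsPal]
  unfold IsPal at *
  have h1 : (l.drop k).take (l.length - 2*k) = (l.take (l.length - k)).drop k := by
    rw [List.drop_take]; congr 1; omega
  rw [h1, List.reverse_drop, List.reverse_take, h, List.drop_take, List.length_take]
  congr 1
  · omega
  · congr 1; omega

lemma isPal_factor_sub (w : List α) {a b x y : ℕ} (hb : b < w.length) (hax : a ≤ x)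
    (hyb : y ≤ b) (hxy : x + y = a + b) (hpal : IsPal (factor w a b)) :
    IsPal (factor w x y) := by
  have h := isPal_drop_take hpal (x - a)
  rw [factor_length w a b hb] at h
  have e : b + 1 - a - 2*(x-a) = y + 1 - x := by omega
  rw [e, drop_take_factor w a b x y hax hyb] at h
  exact h

lemma isPal_extend (w : List α) {a b : ℕ} (ha : 1 ≤ a) (hb : b + 1 < w.length)
    (hab : a ≤ b + 1) (heq : w[a-1]? = w[b+1]?) (hpal : IsPal (factor w a b)) :
    IsPal (factor w (a-1) (b+1)) := by
  have ha' : a - 1 < w.length := by omega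
  have e : factor w (a-1) (b+1) = w[a-1] :: (factor w a b ++ [w[b+1]]) := by
    rw [factor, List.drop_eq_getElem_cons ha']
    have h1 : a - 1 + 1 = a := by omega
    have h2 : b + 1 + 1 - (a-1) = (b + 2 - a) + 1 := by omega
    rw [h1, h2, List.take_succ_cons]
    congr 1
    have h3 : b + 2 - a = (b+1-a) + 1 := by omega
    rw [h3, List.take_succ]
    congr 1
    rw [List.getElem?_drop]
    have h4 : a + (b+1-a) = b+1 := by omega
    rw [h4, List.getElem?_eq_getElem hb]
    rfl
  have hcc : w[a-1] = w[b+1] := by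
    rw [List.getElem?_eq_getElem ha', List.getElem?_eq_getElem hb] at heq
    exact Option.some.inj heq
  rw [e, hcc]
  unfold IsPal at hpal ⊢
  simp [hpal]

lemma extend_maximal (w : List α) : ∀ a b : ℕ, a ≤ b → b < w.length → IsPal (factor w a b) →
    ∃ a₀ b₀ : ℕ, a₀ ≤ a ∧ b ≤ b₀ ∧ a₀ + b₀ = a + b ∧ b₀ < w.length ∧
      IsPal (factor w a₀ b₀) ∧
      (a₀ = 0 ∨ b₀ = w.length - 1 ∨ w[a₀ - 1]? ≠ w[b₀ + 1]?) := by
  intro a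
  induction a with
  | zero => exact fun b hab hb hp => ⟨0, b, le_refl _, le_refl _, rfl, hb, hp, Or.inl rfl⟩
  | succ n ih =>
    intro b hab hb hp
    by_cases h1 : b = w.length - 1
    · exact ⟨n+1, b, le_refl _, le_refl _, rfl, hb, hp, Or.inr (Or.inl h1)⟩
    by_cases h2 : w[n+1-1]? = w[b+1]?
    · have hb1 : b + 1 < w.length := by omega
      obtain ⟨a₀, b₀, g1, g2, g3, g4, g5, g6⟩ := ih (b+1) (by omega) hb1
        (by simpa using isPal_extend w (by omega) hb1 (by omega) h2 hp)
      exact ⟨a₀, b₀, by omega, by omega, by omega, g4, g5, g6⟩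
    · exact ⟨n+1, b, le_refl _, le_refl _, rfl, hb, hp, Or.inr (Or.inr h2)⟩

end Aux

theorem stmt10 {α : Type*} (w : List α) (i j : ℕ) (hij : i ≤ j) (hj : j < w.length) :
    sSup {ℓ : ℕ | ∃ v : List α, v.length = ℓ ∧ v <:+: factor w i j ∧ IsPal v} =
      max (max
        (sSup {ℓ : ℕ | ∃ v : List α, v.length = ℓ ∧ v <+: factor w i j ∧ IsPal v})
        (sSup {ℓ : ℕ | ∃ v : List α, v.length = ℓ ∧ v <:+ factor w i j ∧ IsPal v}))
        (sSup {ℓ : ℕ | ∃ a b : ℕ, i + 1 ≤ a ∧ a ≤ b ∧ b + 1 ≤ j ∧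
          IsPal (factor w a b) ∧
          (a = 0 ∨ b = w.length - 1 ∨ w[a - 1]? ≠ w[b + 1]?) ∧
          ℓ = b - a + 1}) := by
  have hulen : (factor w i j).length = j + 1 - i := factor_length w i j hj
  have bddS : BddAbove {ℓ : ℕ | ∃ v : List α, v.length = ℓ ∧ v <:+: factor w i j ∧ IsPal v} := by
    refine ⟨j + 1, ?_⟩
    rintro ℓ ⟨v, rfl, hvi, -⟩
    have := hvi.length_le
    omega
  apply le_antisymm
  · apply csSup_le'
    rintro ℓ ⟨v, hvl, hvi, hvp⟩
    rcases Nat.eq_zero_or_pos ℓ with h0 | h1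
    · subst h0; exact Nat.zero_le _
    obtain ⟨s, t, hst⟩ := hvi
    have hdl : s.length + ℓ + t.length = j + 1 - i := by
      have hc := congrArg List.length hst
      simp only [List.length_append] at hc
      omega
    set a := i + s.length with ha
    set b := a + ℓ - 1 with hb2
    have hbj2 : b ≤ j := by omega
    have hveq : factor w a b = v := by
      rw [← drop_take_factor w i j a b (by omega) hbj2]
      have e1 : a - i = s.length := by omega
      have e2 : b + 1 - a = ℓ := by omega
      rw [e1, e2]
      have hdrop : (factor w i j).drop s.length = v ++ t := by
        rw [← hst, List.append_assoc, List.drop_left]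
      rw [hdrop, ← hvl, List.take_left]
    have hpalab : IsPal (factor w a b) := hveq ▸ hvp
    have hab : a ≤ b := by omega
    have hbw : b < w.length := by omega
    obtain ⟨a₀, b₀, g1, g2, g3, g4, g5, g6⟩ := extend_maximal w a b hab hbw hpalab
    by_cases hcase : i + 1 ≤ a₀ ∧ b₀ + 1 ≤ j
    · have hle : ℓ ≤ b₀ - a₀ + 1 := by omega
      refine le_trans hle (le_trans (le_csSup ⟨j+1, ?_⟩ ?_) (le_max_right _ _))
      · rintro x ⟨a', b', h1', h2', h3', -, -, rfl⟩; omega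
      · exact ⟨a₀, b₀, hcase.1, by omega, hcase.2, g5, g6, rfl⟩
    · rcases le_or_gt (a + b) (i + j) with hc | hc
      · -- longest palindromic prefix case
        have hai : a₀ ≤ i := by
          rcases not_and_or.mp hcase with h | h <;> omega
        have hp : IsPal (factor w i (a + b - i)) :=
          isPal_factor_sub w g4 hai (by omega) (by omega) g5
        have hpre : factor w i (a+b-i) <+: factor w i j := by
          have h5 := drop_take_factor w i j i (a+b-i) (le_refl i) (by omega)
          rw [Nat.sub_self, List.drop_zero] at h5
          rw [← h5]; exact List.take_prefix _ _
        have hle : ℓ ≤ (a+b-i) + 1 - i := by omega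
        refine le_trans hle (le_trans (le_csSup ⟨j+1, ?_⟩ ?_)
          (le_trans (le_max_left _ _) (le_max_left _ _)))
        · rintro x ⟨v', rfl, hv', -⟩
          have := hv'.length_le
          omega
        · exact ⟨_, factor_length w i (a+b-i) (by omega), hpre, hp⟩
      · -- longest palindromic suffix case
        have hbj0 : j ≤ b₀ := by
          rcases not_and_or.mp hcase with h | h <;> omega
        have hq : IsPal (factor w (a+b-j) j) :=
          isPal_factor_sub w g4 (by omega) hbj0 (by omega) g5
        have hsuf : factor w (a+b-j) j <:+ factor w i j := by
          have h5 := drop_take_factor w i j (a+b-j) j (by omega) (le_refl j)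
          rw [← h5]
          have hlen2 : ((factor w i j).drop ((a+b-j) - i)).length ≤ j + 1 - (a+b-j) := by
            rw [List.length_drop, hulen]; omega
          rw [List.take_of_length_le hlen2]
          exact List.drop_suffix _ _
        have hle : ℓ ≤ j + 1 - (a+b-j) := by omega
        refine le_trans hle (le_trans (le_csSup ⟨j+1, ?_⟩ ?_)
          (le_trans (le_max_right _ _) (le_max_left _ _)))
        · rintro x ⟨v', rfl, hv', -⟩
          have := hv'.length_le
          omega
        · exact ⟨_, factor_length w (a+b-j) j hj, hsuf, hq⟩
  · refine max_le (max_le ?_ ?_) ?_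
    · apply csSup_le'
      rintro ℓ ⟨v, hvl, hvp, hpal⟩
      exact le_csSup bddS ⟨v, hvl, hvp.isInfix, hpal⟩
    · apply csSup_le'
      rintro ℓ ⟨v, hvl, hvp, hpal⟩
      exact le_csSup bddS ⟨v, hvl, hvp.isInfix, hpal⟩
    · apply csSup_le'
      rintro ℓ ⟨a, b, h1, h2, h3, h4, -, rfl⟩
      refine le_csSup bddS ⟨factor w a b, ?_, factor_infix w i j a b (by omega) (by omega), h4⟩
      rw [factor_length w a b (by omega)]
      omega
end
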